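/- Let n ≥ 2, p ≥ 1, ε ∈ [0,1], and let f : ℝⁿ → ℝ be a nonzero nonnegative continuous function with compact support such that h(ξ) := ∫_{ℝⁿ} f(z) ⟨ξ,z⟩_ε^p dz > 0 for every ξ ∈ S^{n−1}. Then ∫_{ℝⁿ} f(x) · ( (1/(n+p)) ∫_{S^{n−1}} h(ξ)^{−(n+p)/p} ⟨x,ξ⟩_ε^p dξ ) dx = (n/(n+p)) · vol( { y ∈ ℝⁿ : ∫_{ℝⁿ} f(z) ⟨y,z⟩_ε^p dz ≤ 1 } ), where vol denotes Lebesgue measure. -/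

import Mathlib

open MeasureTheory Real
open scoped RealInnerProductSpace

/-- The asymmetric bracket `⟨x,y⟩_ε^p` applied to a real number `s = ⟨x,y⟩`:
`(1-ε) (max{s,0})^p + ε (max{-s,0})^p`. -/
noncomputable def epsPow (eps p s : ℝ) : ℝ :=
  (1 - eps) * (max s 0) ^ p + eps * (max (-s) 0) ^ p

lemma epsPow_nonneg {eps p : ℝ} (h0 : 0 ≤ eps) (h1 : eps ≤ 1) (s : ℝ) :
    0 ≤ epsPow eps p s := by
  have a1 := Real.rpow_nonneg (le_max_right s 0) p
  have a2 := Real.rpow_nonneg (le_max_right (-s) 0) p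
  unfold epsPow; nlinarith

lemma epsPow_le_abs {eps p : ℝ} (h0 : 0 ≤ eps) (h1 : eps ≤ 1) (hp : 0 ≤ p) (s : ℝ) :
    epsPow eps p s ≤ |s| ^ p := by
  have h1' : (max s 0) ^ p ≤ |s| ^ p :=
    Real.rpow_le_rpow (le_max_right _ _) (max_le (le_abs_self s) (abs_nonneg s)) hp
  have h2' : (max (-s) 0) ^ p ≤ |s| ^ p :=
    Real.rpow_le_rpow (le_max_right _ _)
      (max_le (by rw [← abs_neg]; exact le_abs_self _) (abs_nonneg s)) hp
  calc epsPow eps p s ≤ (1 - eps) * |s| ^ p + eps * |s| ^ p :=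
        add_le_add (mul_le_mul_of_nonneg_left h1' (by linarith))
          (mul_le_mul_of_nonneg_left h2' h0)
    _ = |s| ^ p := by ring

lemma epsPow_smul {eps p : ℝ} {r : ℝ} (hr : 0 ≤ r) (s : ℝ) :
    epsPow eps p (r * s) = r ^ p * epsPow eps p s := by
  have hm1 : max (r * s) 0 = r * max s 0 := by
    rw [mul_max_of_nonneg _ _ hr, mul_zero]
  have hm2 : max (-(r * s)) 0 = r * max (-s) 0 := by
    rw [mul_max_of_nonneg _ _ hr, mul_zero, neg_mul_eq_mul_neg]
  unfold epsPow
  rw [hm1, hm2, Real.mul_rpow hr (le_max_right _ _), Real.mul_rpow hr (le_max_right _ _)]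
  ring

lemma continuous_epsPow {eps p : ℝ} (hp : 0 ≤ p) : Continuous (epsPow eps p) := by
  unfold epsPow
  exact (continuous_const.mul ((Real.continuous_rpow_const hp).comp
      (continuous_id.max continuous_const))).add
    (continuous_const.mul ((Real.continuous_rpow_const hp).comp
      (continuous_neg.max continuous_const)))

/-- The key computation: `∫ f(x) g(M°_{ε,p} M°_{ε,p} f, x)^p dx = (n/(n+p)) vol(M°_{ε,p} f)`. -/
theorem integral_gauge_pow_eq_vol_polar_moment_body (n : ℕ) (hn : 2 ≤ n) (p : ℝ) (hp : 1 ≤ p)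
    (eps : ℝ) (heps0 : 0 ≤ eps) (heps1 : eps ≤ 1)
    (f : EuclideanSpace ℝ (Fin n) → ℝ) (hf_cont : Continuous f)
    (hf_nonneg : ∀ x, 0 ≤ f x) (hf_supp : HasCompactSupport f) (hf_ne : f ≠ 0)
    (hpos : ∀ ξ : Metric.sphere (0 : EuclideanSpace ℝ (Fin n)) 1,
      0 < ∫ z, f z * epsPow eps p ⟪(ξ : EuclideanSpace ℝ (Fin n)), z⟫) :
    (∫ x, f x *
        ((1 / ((n : ℝ) + p)) *
          ∫ ξ : Metric.sphere (0 : EuclideanSpace ℝ (Fin n)) 1,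
            (∫ z, f z * epsPow eps p ⟪(ξ : EuclideanSpace ℝ (Fin n)), z⟫) ^
                (-((n : ℝ) + p) / p) *
              epsPow eps p ⟪x, (ξ : EuclideanSpace ℝ (Fin n))⟫
          ∂((volume : Measure (EuclideanSpace ℝ (Fin n))).toSphere))) =
      ((n : ℝ) / ((n : ℝ) + p)) *
        (volume {y : EuclideanSpace ℝ (Fin n) |
          ∫ z, f z * epsPow eps p ⟪y, z⟫ ≤ 1}).toReal := by
  classical
  have hp0 : (0:ℝ) < p := lt_of_lt_of_le one_pos hp
  have hn2 : (2:ℝ) ≤ (n:ℝ) := by exact_mod_cast hn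
  have hnp : (0:ℝ) < (n:ℝ) + p := by linarith
  have hn0 : (0:ℝ) < (n:ℝ) := by linarith
  haveI : Nonempty (Fin n) := ⟨⟨0, by omega⟩⟩
  set g : EuclideanSpace ℝ (Fin n) → ℝ := fun y => ∫ z, f z * epsPow eps p ⟪y, z⟫
    with hg_def
  have hgξ : ∀ y : EuclideanSpace ℝ (Fin n),
      (∫ z, f z * epsPow eps p ⟪y, z⟫) = g y := fun y => rfl
  simp only [hgξ] at hpos ⊢
  -- continuity of g
  have hg_cont : Continuous g := by
    rw [hg_def, continuous_iff_continuousAt]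
    intro y₀
    have hb_int : Integrable (fun z : EuclideanSpace ℝ (Fin n) =>
        f z * ((‖y₀‖ + 1) * ‖z‖) ^ p) volume := by
      refine Continuous.integrable_of_hasCompactSupport
        (hf_cont.mul ((Real.continuous_rpow_const hp0.le).comp
          (continuous_const.mul continuous_norm))) ?_
      exact HasCompactSupport.mul_right hf_supp
    refine continuousAt_of_dominated ?_ ?_ hb_int ?_
    · exact Filter.Eventually.of_forall fun y =>
        (hf_cont.mul ((continuous_epsPow hp0.le).comp
          (continuous_const.inner continuous_id))).aestronglyMeasurable
    · filter_upwards [Metric.ball_mem_nhds y₀ one_pos] with y hy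
      refine Filter.Eventually.of_forall fun z => ?_
      have hy' : ‖y‖ ≤ ‖y₀‖ + 1 := by
        have h1 : ‖y - y₀‖ < 1 := by rw [← dist_eq_norm]; exact Metric.mem_ball.1 hy
        have h2 := norm_sub_norm_le y y₀
        linarith
      have h1 : epsPow eps p ⟪y, z⟫ ≤ |⟪y, z⟫| ^ p := epsPow_le_abs heps0 heps1 hp0.le _
      have h2 : |⟪y, z⟫| ^ p ≤ ((‖y₀‖ + 1) * ‖z‖) ^ p :=
        Real.rpow_le_rpow (abs_nonneg _)
          ((abs_real_inner_le_norm _ _).trans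
            (mul_le_mul_of_nonneg_right hy' (norm_nonneg _))) hp0.le
      rw [Real.norm_eq_abs, abs_of_nonneg (mul_nonneg (hf_nonneg z)
        (epsPow_nonneg heps0 heps1 _))]
      exact mul_le_mul_of_nonneg_left (h1.trans h2) (hf_nonneg z)
    · exact Filter.Eventually.of_forall fun z =>
        (continuous_const.mul ((continuous_epsPow hp0.le).comp
          (continuous_id.inner continuous_const))).continuousAt
  -- homogeneity
  have hg_hom : ∀ (r : ℝ), 0 ≤ r → ∀ y : EuclideanSpace ℝ (Fin n),
      g (r • y) = r ^ p * g y := by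
    intro r hr y
    rw [hg_def]
    simp only
    rw [← integral_const_mul]
    refine integral_congr_ae (Filter.Eventually.of_forall fun z => ?_)
    show f z * epsPow eps p ⟪r • y, z⟫ = r ^ p * (f z * epsPow eps p ⟪y, z⟫)
    rw [real_inner_smul_left, epsPow_smul hr]; ring
  have hgs_pos : ∀ ξ : Metric.sphere (0 : EuclideanSpace ℝ (Fin n)) 1, 0 < g ↑ξ := hpos
  set a : ℝ := -((n : ℝ) + p) / p with ha_def
  have ha_nonpos : a ≤ 0 := by
    rw [ha_def]
    apply div_nonpos_of_nonpos_of_nonneg <;> linarith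
  set φ : Metric.sphere (0 : EuclideanSpace ℝ (Fin n)) 1 → ℝ :=
    fun ξ => (g ↑ξ) ^ (-(n:ℝ)/p) with hφ_def
  have hφ_cont : Continuous φ := by
    rw [hφ_def, continuous_iff_continuousAt]
    intro ξ
    have h2 : ContinuousAt (fun ξ : Metric.sphere (0 : EuclideanSpace ℝ (Fin n)) 1 => g ↑ξ)
        ξ := (hg_cont.comp continuous_subtype_val).continuousAt
    exact (h2.rpow_const (Or.inl (hgs_pos ξ).ne'))
  have hφ_nonneg : ∀ ξ, 0 ≤ φ ξ := fun ξ => Real.rpow_nonneg (hgs_pos ξ).le _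
  have hφ_int : Integrable φ ((volume : Measure (EuclideanSpace ℝ (Fin n))).toSphere) := by
    refine hφ_cont.integrable_of_hasCompactSupport ?_
    exact IsCompact.of_isClosed_subset isCompact_univ (isClosed_tsupport _) (Set.subset_univ _)
  have hga_cont : Continuous fun ξ : Metric.sphere (0 : EuclideanSpace ℝ (Fin n)) 1 =>
      (g ↑ξ) ^ a := by
    rw [continuous_iff_continuousAt]
    intro ξ
    have h2 : ContinuousAt (fun ξ : Metric.sphere (0 : EuclideanSpace ℝ (Fin n)) 1 => g ↑ξ)
        ξ := (hg_cont.comp continuous_subtype_val).continuousAt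
    exact (h2.rpow_const (Or.inl (hgs_pos ξ).ne'))
  -- minimum of g on the sphere
  obtain ⟨x₀, hx₀mem, hx₀min⟩ :=
    (isCompact_sphere (0 : EuclideanSpace ℝ (Fin n)) 1).exists_isMinOn
      (NormedSpace.sphere_nonempty.2 zero_le_one) hg_cont.continuousOn
  have hc : 0 < g x₀ := hgs_pos ⟨x₀, hx₀mem⟩
  have hC0 : 0 ≤ (g x₀) ^ a := Real.rpow_nonneg hc.le _
  have hgaC : ∀ ξ : Metric.sphere (0 : EuclideanSpace ℝ (Fin n)) 1,
      (g ↑ξ) ^ a ≤ (g x₀) ^ a := fun ξ =>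
    Real.rpow_le_rpow_of_nonpos hc (hx₀min ξ.2) ha_nonpos
  -- integrability on the product
  have hFmeas : Continuous (fun q : EuclideanSpace ℝ (Fin n) ×
      Metric.sphere (0 : EuclideanSpace ℝ (Fin n)) 1 =>
      f q.1 * ((g ↑q.2) ^ a * epsPow eps p ⟪q.1, (q.2 : EuclideanSpace ℝ (Fin n))⟫)) := by
    exact (hf_cont.comp continuous_fst).mul ((hga_cont.comp continuous_snd).mul
      ((continuous_epsPow hp0.le).comp
        (continuous_fst.inner (continuous_subtype_val.comp continuous_snd))))
  have hGint : Integrable (fun x : EuclideanSpace ℝ (Fin n) =>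
      f x * ((g x₀) ^ a * ‖x‖ ^ p)) volume := by
    refine Continuous.integrable_of_hasCompactSupport
      (hf_cont.mul (continuous_const.mul ((Real.continuous_rpow_const hp0.le).comp
        continuous_norm))) ?_
    exact HasCompactSupport.mul_right hf_supp
  have hFint : Integrable (fun q : EuclideanSpace ℝ (Fin n) ×
      Metric.sphere (0 : EuclideanSpace ℝ (Fin n)) 1 =>
      f q.1 * ((g ↑q.2) ^ a * epsPow eps p ⟪q.1, (q.2 : EuclideanSpace ℝ (Fin n))⟫))
      (volume.prod ((volume : Measure (EuclideanSpace ℝ (Fin n))).toSphere)) := by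
    refine (hGint.mul_prod (integrable_const (1:ℝ))).mono hFmeas.aestronglyMeasurable ?_
    refine Filter.Eventually.of_forall fun q => ?_
    have hξ : ‖(q.2 : EuclideanSpace ℝ (Fin n))‖ = 1 :=
      mem_sphere_zero_iff_norm.1 q.2.2
    have e1 : epsPow eps p ⟪q.1, (q.2 : EuclideanSpace ℝ (Fin n))⟫ ≤ ‖q.1‖ ^ p := by
      refine (epsPow_le_abs heps0 heps1 hp0.le _).trans ?_
      refine Real.rpow_le_rpow (abs_nonneg _) ?_ hp0.le
      have := abs_real_inner_le_norm q.1 (q.2 : EuclideanSpace ℝ (Fin n))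
      rwa [hξ, mul_one] at this
    have hga_nonneg : 0 ≤ (g ↑q.2) ^ a := Real.rpow_nonneg (hgs_pos q.2).le _
    have he_nonneg : 0 ≤ epsPow eps p ⟪q.1, (q.2 : EuclideanSpace ℝ (Fin n))⟫ :=
      epsPow_nonneg heps0 heps1 _
    rw [Real.norm_eq_abs, Real.norm_eq_abs, mul_one,
      abs_of_nonneg (mul_nonneg (hf_nonneg _) (mul_nonneg hga_nonneg he_nonneg)),
      abs_of_nonneg (mul_nonneg (hf_nonneg _)
        (mul_nonneg hC0 (Real.rpow_nonneg (norm_nonneg _) _)))]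
    exact mul_le_mul_of_nonneg_left
      (mul_le_mul (hgaC q.2) e1 he_nonneg hC0) (hf_nonneg _)
  -- key Fubini identity
  have key : (∫ x, f x * ∫ ξ : Metric.sphere (0 : EuclideanSpace ℝ (Fin n)) 1,
      (g ↑ξ) ^ a * epsPow eps p ⟪x, (ξ : EuclideanSpace ℝ (Fin n))⟫
        ∂((volume : Measure (EuclideanSpace ℝ (Fin n))).toSphere))
      = ∫ ξ, φ ξ ∂((volume : Measure (EuclideanSpace ℝ (Fin n))).toSphere) := by
    have step1 : (∫ x, f x * ∫ ξ : Metric.sphere (0 : EuclideanSpace ℝ (Fin n)) 1,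
        (g ↑ξ) ^ a * epsPow eps p ⟪x, (ξ : EuclideanSpace ℝ (Fin n))⟫
          ∂((volume : Measure (EuclideanSpace ℝ (Fin n))).toSphere))
        = ∫ x, ∫ ξ : Metric.sphere (0 : EuclideanSpace ℝ (Fin n)) 1,
          f x * ((g ↑ξ) ^ a * epsPow eps p ⟪x, (ξ : EuclideanSpace ℝ (Fin n))⟫)
          ∂((volume : Measure (EuclideanSpace ℝ (Fin n))).toSphere) := by
      refine integral_congr_ae (Filter.Eventually.of_forall fun x => ?_)
      exact (integral_const_mul (f x) _).symm
    rw [step1, integral_integral_swap hFint]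
    refine integral_congr_ae (Filter.Eventually.of_forall fun ξ => ?_)
    have step2 : ∀ x : EuclideanSpace ℝ (Fin n),
        f x * ((g ↑ξ) ^ a * epsPow eps p ⟪x, (ξ : EuclideanSpace ℝ (Fin n))⟫)
        = (g ↑ξ) ^ a * (f x * epsPow eps p ⟪x, (ξ : EuclideanSpace ℝ (Fin n))⟫) :=
      fun x => by ring
    simp only [step2]
    rw [integral_const_mul]
    have step3 : (∫ x, f x * epsPow eps p ⟪x, (ξ : EuclideanSpace ℝ (Fin n))⟫) = g ↑ξ := by
      rw [← hgξ ↑ξ]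
      refine integral_congr_ae (Filter.Eventually.of_forall fun x => ?_)
      show f x * epsPow eps p ⟪x, (ξ : EuclideanSpace ℝ (Fin n))⟫
        = f x * epsPow eps p ⟪(ξ : EuclideanSpace ℝ (Fin n)), x⟫
      rw [real_inner_comm]
    rw [step3, hφ_def]
    have hgp := hgs_pos ξ
    rw [show (g ↑ξ) ^ a * g ↑ξ = (g ↑ξ) ^ a * (g ↑ξ) ^ (1:ℝ) by rw [Real.rpow_one],
      ← Real.rpow_add hgp]
    congr 1
    rw [ha_def]
    field_simp
    ring
  -- volume identity
  have hvol : volume {y : EuclideanSpace ℝ (Fin n) | g y ≤ 1}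
      = ENNReal.ofReal ((∫ ξ, φ ξ
          ∂((volume : Measure (EuclideanSpace ℝ (Fin n))).toSphere)) / n) := by
    have hdim : Module.finrank ℝ (EuclideanSpace ℝ (Fin n)) = n := finrank_euclideanSpace_fin
    set T : Set (Metric.sphere (0 : EuclideanSpace ℝ (Fin n)) 1 × Set.Ioi (0:ℝ)) :=
      {q | g (((q.2 : ℝ)) • (q.1 : EuclideanSpace ℝ (Fin n))) ≤ 1} with hT_def
    have hT_meas : MeasurableSet T := by
      refine (isClosed_le (hg_cont.comp ?_) continuous_const).measurableSet
      exact (continuous_subtype_val.comp continuous_snd).smul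
        (continuous_subtype_val.comp continuous_fst)
    have hsingle : ∀ x : Set.Ioi (0:ℝ),
        Measure.volumeIoiPow (Module.finrank ℝ (EuclideanSpace ℝ (Fin n)) - 1) {x} = 0 := by
      intro x
      rw [Measure.volumeIoiPow, withDensity_apply _ (measurableSet_singleton x)]
      have h0 : (volume.comap (Subtype.val : Set.Ioi (0:ℝ) → ℝ)) {x} = 0 := by
        rw [comap_subtype_coe_apply measurableSet_Ioi, Set.image_singleton]
        exact measure_singleton _
      exact setLIntegral_measure_zero _ _ h0
    have hmp := (volume :
      Measure (EuclideanSpace ℝ (Fin n))).measurePreserving_homeomorphUnitSphereProd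
    have hpre : (Subtype.val ⁻¹' {y : EuclideanSpace ℝ (Fin n) | g y ≤ 1} :
        Set ({0}ᶜ : Set (EuclideanSpace ℝ (Fin n))))
        = (homeomorphUnitSphereProd (EuclideanSpace ℝ (Fin n))) ⁻¹' T := by
      ext x
      have hx0 : (x : EuclideanSpace ℝ (Fin n)) ≠ 0 := x.2
      simp only [Set.mem_preimage, Set.mem_setOf_eq, hT_def,
        homeomorphUnitSphereProd_apply_snd_coe, homeomorphUnitSphereProd_apply_fst_coe]
      rw [smul_inv_smul₀ (norm_ne_zero_iff.2 hx0)]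
    calc volume {y : EuclideanSpace ℝ (Fin n) | g y ≤ 1}
        = volume ({y : EuclideanSpace ℝ (Fin n) | g y ≤ 1} \ {0}) :=
          (measure_diff_null (measure_singleton 0)).symm
      _ = (volume.comap (Subtype.val : ({0}ᶜ : Set (EuclideanSpace ℝ (Fin n))) → _))
            (Subtype.val ⁻¹' {y | g y ≤ 1}) := by
          rw [comap_subtype_coe_apply (measurableSet_singleton 0).compl,
            Set.image_preimage_eq_inter_range, Subtype.range_coe, Set.diff_eq]
      _ = ((volume : Measure (EuclideanSpace ℝ (Fin n))).toSphere.prod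
            (Measure.volumeIoiPow (Module.finrank ℝ (EuclideanSpace ℝ (Fin n)) - 1))) T := by
          rw [hpre]
          exact hmp.measure_preimage hT_meas.nullMeasurableSet
      _ = ∫⁻ ξ, Measure.volumeIoiPow (Module.finrank ℝ (EuclideanSpace ℝ (Fin n)) - 1)
            (Prod.mk ξ ⁻¹' T) ∂(volume : Measure (EuclideanSpace ℝ (Fin n))).toSphere :=
          Measure.prod_apply hT_meas
      _ = ∫⁻ ξ, ENNReal.ofReal (φ ξ / n)
            ∂(volume : Measure (EuclideanSpace ℝ (Fin n))).toSphere := by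
          refine lintegral_congr fun ξ => ?_
          have hgp : 0 < g ↑ξ := hgs_pos ξ
          have hcpos : (0:ℝ) < (g ↑ξ) ^ (-1/p) := Real.rpow_pos_of_pos hgp _
          have hslice : (Prod.mk ξ ⁻¹' T)
              = Set.Iic (⟨(g ↑ξ) ^ (-1/p), hcpos⟩ : Set.Ioi (0:ℝ)) := by
            ext r
            have hr0 : (0:ℝ) < r := r.2
            simp only [Set.mem_preimage, hT_def, Set.mem_setOf_eq, Set.mem_Iic,
              ← Subtype.coe_le_coe]
            rw [hg_hom _ hr0.le]
            have h2 : ((g ↑ξ) ^ (-1/p)) ^ p = (g ↑ξ)⁻¹ := by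
              rw [← Real.rpow_mul hgp.le]
              rw [show (-1/p) * p = -1 by field_simp]
              exact Real.rpow_neg_one _
            constructor
            · intro h
              have h3 : (r:ℝ) ^ p ≤ (g ↑ξ)⁻¹ := by
                rw [← one_div, le_div_iff₀ hgp]
                exact h
              rw [← h2] at h3
              exact (Real.rpow_le_rpow_iff hr0.le hcpos.le hp0).1 h3
            · intro h
              have h3 : (r:ℝ) ^ p ≤ ((g ↑ξ) ^ (-1/p)) ^ p :=
                Real.rpow_le_rpow hr0.le h hp0.le
              rw [h2] at h3
              calc (r:ℝ)^p * g ↑ξ ≤ (g ↑ξ)⁻¹ * g ↑ξ :=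
                    mul_le_mul_of_nonneg_right h3 hgp.le
                _ = 1 := inv_mul_cancel₀ hgp.ne'
          have hIicIio : Measure.volumeIoiPow (Module.finrank ℝ (EuclideanSpace ℝ (Fin n)) - 1)
              (Set.Iic (⟨(g ↑ξ) ^ (-1/p), hcpos⟩ : Set.Ioi (0:ℝ)))
              = Measure.volumeIoiPow (Module.finrank ℝ (EuclideanSpace ℝ (Fin n)) - 1)
              (Set.Iio (⟨(g ↑ξ) ^ (-1/p), hcpos⟩ : Set.Ioi (0:ℝ))) := by
            refine le_antisymm ?_ (measure_mono Set.Iio_subset_Iic_self)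
            rw [← Set.Iio_union_right]
            refine (measure_union_le _ _).trans ?_
            rw [hsingle, add_zero]
          rw [hslice, hIicIio, Measure.volumeIoiPow_apply_Iio]
          have hnn : Module.finrank ℝ (EuclideanSpace ℝ (Fin n)) - 1 + 1 = n := by
            rw [hdim]; omega
          rw [hnn]
          have hpow : ((g ↑ξ) ^ (-1/p)) ^ n = (g ↑ξ) ^ (-(n:ℝ)/p) := by
            rw [← Real.rpow_natCast ((g ↑ξ) ^ (-1/p)) n, ← Real.rpow_mul hgp.le]
            congr 1
            ring
          have hden : ((Module.finrank ℝ (EuclideanSpace ℝ (Fin n)) - 1 : ℕ) : ℝ) + 1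
              = (n:ℝ) := by
            rw [hdim, Nat.cast_sub (by omega)]
            push_cast
            ring
          simp only [hφ_def]
          rw [hpow, hden]
      _ = ENNReal.ofReal ((∫ ξ, φ ξ
            ∂(volume : Measure (EuclideanSpace ℝ (Fin n))).toSphere) / n) := by
          rw [← ofReal_integral_eq_lintegral_ofReal (hφ_int.div_const _)
            (Filter.Eventually.of_forall fun ξ => div_nonneg (hφ_nonneg ξ) hn0.le)]
          rw [integral_div]
  -- final assembly
  have hstep : ∀ x : EuclideanSpace ℝ (Fin n),
      f x * (1 / ((n:ℝ) + p) * ∫ ξ : Metric.sphere (0 : EuclideanSpace ℝ (Fin n)) 1,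
        (g ↑ξ) ^ a * epsPow eps p ⟪x, (ξ : EuclideanSpace ℝ (Fin n))⟫
        ∂((volume : Measure (EuclideanSpace ℝ (Fin n))).toSphere))
      = (1 / ((n:ℝ) + p)) * (f x * ∫ ξ : Metric.sphere (0 : EuclideanSpace ℝ (Fin n)) 1,
        (g ↑ξ) ^ a * epsPow eps p ⟪x, (ξ : EuclideanSpace ℝ (Fin n))⟫
        ∂((volume : Measure (EuclideanSpace ℝ (Fin n))).toSphere)) := fun x => by ring
  simp only [hstep]
  rw [integral_const_mul, key, hvol]
  have hIphi : 0 ≤ ∫ ξ, φ ξ ∂((volume : Measure (EuclideanSpace ℝ (Fin n))).toSphere) :=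
    integral_nonneg hφ_nonneg
  rw [ENNReal.toReal_ofReal (div_nonneg hIphi hn0.le)]
  field_simp
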